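/- Let m ∉ {0, −1} and ρ, λ be real parameters, let I ⊆ ℝ be an open interval, and let a, b : I → ℝ be differentiable functions with Q(a(s),b(s)) ≠ 0 for all s ∈ I, whose derivatives satisfy a'(s) = A₀(a(s),b(s)) and b'(s) = B₀(a(s),b(s)). Define X(s) := X₀(a(s),b(s)) and suppose X is differentiable with X'(s) = −2b(s)X(s) on I. Then for every s ∈ I, (a(s)−b(s))·b(s)·(3a(s)b(s)(4ρ−1) − λ)·(λ(m−1)(3ρ−1) + a(s)b(s)(m−1)(4ρ−1) + a(s)²(9ρ−2)(4ρ−1+m(2ρ−1))) = 0. -/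

import Mathlib

noncomputable section

/-- Q(a,b) := b(m−1)(4ρ−1) + a(4ρ−1+m(2ρ−1)) -/
def Q (m ρ a b : ℝ) : ℝ := b * (m - 1) * (4 * ρ - 1) + a * (4 * ρ - 1 + m * (2 * ρ - 1))

/-- X₀(a,b) := (b−a)·(b²(m−1)(1−4ρ) − λ(m+1) + 2ab(4ρ−1+m(5ρ−1)))/Q(a,b) -/
def X0 (m ρ lam a b : ℝ) : ℝ :=
  (b - a) * (b ^ 2 * (m - 1) * (1 - 4 * ρ) - lam * (m + 1)
      + 2 * a * b * (4 * ρ - 1 + m * (5 * ρ - 1))) / Q m ρ a b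

/-- A₀(a,b) := (bλ(m−1) + a²b(1−2(m+2)ρ) + a³(1−4ρ+m(1−2ρ)) + a(λ − 2b²(m−1)(4ρ−1)))/Q(a,b) -/
def A0 (m ρ lam a b : ℝ) : ℝ :=
  (b * lam * (m - 1) + a ^ 2 * b * (1 - 2 * (m + 2) * ρ)
      + a ^ 3 * (1 - 4 * ρ + m * (1 - 2 * ρ))
      + a * (lam - 2 * b ^ 2 * (m - 1) * (4 * ρ - 1))) / Q m ρ a b

/-- B₀(a,b) := b·(λm − b²(m−1)(4ρ−1) − a²(1+m−4ρ−2mρ) − ab(8ρ−2+m(10ρ−3)))/Q(a,b) -/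
def B0 (m ρ lam a b : ℝ) : ℝ :=
  b * (lam * m - b ^ 2 * (m - 1) * (4 * ρ - 1) - a ^ 2 * (1 + m - 4 * ρ - 2 * m * ρ)
      - a * b * (8 * ρ - 2 + m * (10 * ρ - 3))) / Q m ρ a b

/-- Let m ∉ {0, −1} and ρ, λ be real parameters, let I ⊆ ℝ be an open
interval, and let a, b : I → ℝ be differentiable functions with Q(a(s),b(s)) ≠ 0 for
all s ∈ I, whose derivatives satisfy a'(s) = A₀(a(s),b(s)) and b'(s) = B₀(a(s),b(s)).
Define X(s) := X₀(a(s),b(s)) and suppose X is differentiable with X'(s) = −2b(s)X(s)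
on I.  Then for every s ∈ I,
(a(s)−b(s))·b(s)·(3a(s)b(s)(4ρ−1) − λ)·(λ(m−1)(3ρ−1) + a(s)b(s)(m−1)(4ρ−1)
  + a(s)²(9ρ−2)(4ρ−1+m(2ρ−1))) = 0. -/
theorem stmt_5 (m ρ lam : ℝ) (hm0 : m ≠ 0) (hm1 : m ≠ -1)
    (I : Set ℝ) (hI : IsOpen I) (hIc : I.OrdConnected)
    (a b : ℝ → ℝ)
    (hQ : ∀ s ∈ I, Q m ρ (a s) (b s) ≠ 0)
    (hda : ∀ s ∈ I, HasDerivAt a (A0 m ρ lam (a s) (b s)) s)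
    (hdb : ∀ s ∈ I, HasDerivAt b (B0 m ρ lam (a s) (b s)) s)
    (hX : ∀ s ∈ I, HasDerivAt (fun t => X0 m ρ lam (a t) (b t))
        (-2 * b s * X0 m ρ lam (a s) (b s)) s) :
    ∀ s ∈ I, (a s - b s) * b s * (3 * a s * b s * (4 * ρ - 1) - lam)
      * (lam * (m - 1) * (3 * ρ - 1) + a s * b s * (m - 1) * (4 * ρ - 1)
          + (a s) ^ 2 * (9 * ρ - 2) * (4 * ρ - 1 + m * (2 * ρ - 1))) = 0 := by
  intro s hs
  have hA := hda s hs
  have hB := hdb s hs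
  have hq : b s * (m - 1) * (4 * ρ - 1) + a s * (4 * ρ - 1 + m * (2 * ρ - 1)) ≠ 0 := hQ s hs
  have hnum : HasDerivAt (fun t => (b t - a t) * ((b t) ^ 2 * (m - 1) * (1 - 4 * ρ)
      - lam * (m + 1) + 2 * a t * b t * (4 * ρ - 1 + m * (5 * ρ - 1))))
      ((B0 m ρ lam (a s) (b s) - A0 m ρ lam (a s) (b s)) * ((b s) ^ 2 * (m - 1) * (1 - 4 * ρ)
      - lam * (m + 1) + 2 * a s * b s * (4 * ρ - 1 + m * (5 * ρ - 1)))
      + (b s - a s) * (((2 : ℕ) * b s ^ (2 - 1) * B0 m ρ lam (a s) (b s)) * (m - 1) * (1 - 4 * ρ)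
        + (2 * A0 m ρ lam (a s) (b s) * b s + 2 * a s * B0 m ρ lam (a s) (b s))
          * (4 * ρ - 1 + m * (5 * ρ - 1)))) s := by
    exact (hB.sub hA).mul
      (((((hB.pow 2).mul_const (m - 1)).mul_const (1 - 4 * ρ)).sub_const (lam * (m + 1))).add
        (((hA.const_mul 2).mul hB).mul_const (4 * ρ - 1 + m * (5 * ρ - 1))))
  have hden : HasDerivAt (fun t => b t * (m - 1) * (4 * ρ - 1) + a t * (4 * ρ - 1 + m * (2 * ρ - 1)))
      (B0 m ρ lam (a s) (b s) * (m - 1) * (4 * ρ - 1)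
        + A0 m ρ lam (a s) (b s) * (4 * ρ - 1 + m * (2 * ρ - 1))) s :=
    ((hB.mul_const (m - 1)).mul_const (4 * ρ - 1)).add (hA.mul_const (4 * ρ - 1 + m * (2 * ρ - 1)))
  have hF := hnum.div hden hq
  have key := hF.unique (hX s hs)
  have hm1' : m + 1 ≠ 0 := fun h => hm1 (by linarith)
  have hc : (2 : ℝ) * m * (m + 1) ≠ 0 := by positivity
  simp only [X0, A0, B0, Q] at key
  have hq2 : b s * (m - 1) * (4 * ρ - 1) + a s * (4 * ρ - 1 + m * (ρ * 2 - 1)) ≠ 0 := by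
    convert hq using 3; ring
  field_simp at key
  have h2 : 2 * m * (m + 1) * (b s * (m - 1) * (4 * ρ - 1) + a s * (4 * ρ - 1 + m * (2 * ρ - 1)))
      * ((a s - b s) * b s * (3 * a s * b s * (4 * ρ - 1) - lam)
      * (lam * (m - 1) * (3 * ρ - 1) + a s * b s * (m - 1) * (4 * ρ - 1)
          + (a s) ^ 2 * (9 * ρ - 2) * (4 * ρ - 1 + m * (2 * ρ - 1)))) = 0 := by
    set_option maxRecDepth 100000 in
    linear_combination (b s * (m - 1) * (4 * ρ - 1) + a s * (4 * ρ - 1 + m * (2 * ρ - 1))) * key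
  have hcq : 2 * m * (m + 1) * (b s * (m - 1) * (4 * ρ - 1) + a s * (4 * ρ - 1 + m * (2 * ρ - 1))) ≠ 0 :=
    mul_ne_zero hc hq
  exact (mul_eq_zero.mp h2).resolve_left hcq
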